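/- If f(p) = D(a_0,...,a_n;p) is an optimal penalty function with a_0 < a_1 < ... < a_n, then the equimax property holds: for each i = 0,...,n-1, the set of absolute maxima M(f) intersects the open interval (a_i, a_{i+1}). -/

import Mathlib

open Finset

noncomputable def penalty (n : ℕ) (a : Fin (n+1) → ℝ) (p : ℝ) : ℝ :=
  ∑ k : Fin (n+1), (n.choose (k:ℕ) : ℝ) * p ^ (k:ℕ) * (1 - p) ^ (n - (k:ℕ)) * |p - a k|

def IsOptimal (n : ℕ) (a : Fin (n+1) → ℝ) : Prop :=
  (∀ k, a k ∈ Set.Icc (0:ℝ) 1) ∧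
  ∀ b : Fin (n+1) → ℝ, (∀ k, b k ∈ Set.Icc (0:ℝ) 1) →
    sSup ((fun p => penalty n a p) '' Set.Icc (0:ℝ) 1) ≤
      sSup ((fun p => penalty n b p) '' Set.Icc (0:ℝ) 1)

noncomputable def Bw (n : ℕ) (k : Fin (n+1)) (p : ℝ) : ℝ :=
  (n.choose (k:ℕ) : ℝ) * p ^ (k:ℕ) * (1 - p) ^ (n - (k:ℕ))

lemma penalty_eq_B (n : ℕ) (a : Fin (n+1) → ℝ) (p : ℝ) :
    penalty n a p = ∑ k : Fin (n+1), Bw n k p * |p - a k| := rfl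

lemma Bw_nonneg (n : ℕ) (k : Fin (n+1)) {p : ℝ} (hp : p ∈ Set.Icc (0:ℝ) 1) :
    0 ≤ Bw n k p := by
  obtain ⟨h0, h1⟩ := hp
  unfold Bw
  have : (0:ℝ) ≤ 1 - p := by linarith
  positivity

lemma exists_sSup_max {g : ℝ → ℝ} (hg : Continuous g) :
    ∃ x ∈ Set.Icc (0:ℝ) 1, (∀ y ∈ Set.Icc (0:ℝ) 1, g y ≤ g x) ∧
      sSup (g '' Set.Icc (0:ℝ) 1) = g x := by
  obtain ⟨x, hx, hmax⟩ := isCompact_Icc.exists_isMaxOn (Set.nonempty_Icc.2 zero_le_one)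
    hg.continuousOn
  refine ⟨x, hx, hmax, ?_⟩
  apply IsGreatest.csSup_eq
  exact ⟨⟨x, hx, rfl⟩, by rintro _ ⟨y, hy, rfl⟩; exact hmax hy⟩

lemma penalty_cont (n : ℕ) (a : Fin (n+1) → ℝ) : Continuous (penalty n a) := by
  unfold penalty
  apply continuous_finset_sum
  intro k _
  have : Continuous (fun p : ℝ => |p - a k|) := by fun_prop
  fun_prop

lemma penalty_zero (n : ℕ) (a : Fin (n+1) → ℝ) : penalty n a 0 = |a 0| := by
  rw [penalty_eq_B, Finset.sum_eq_single (0 : Fin (n+1))]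
  · simp [Bw, abs_sub_comm]
  · intro k _ hk
    have : (k : ℕ) ≠ 0 := fun h => hk (Fin.ext h)
    simp [Bw, zero_pow this]
  · simp

lemma penalty_one (n : ℕ) (a : Fin (n+1) → ℝ) : penalty n a 1 = |1 - a (Fin.last n)| := by
  rw [penalty_eq_B, Finset.sum_eq_single (Fin.last n)]
  · simp [Bw]
  · intro k _ hk
    have hk' : (k : ℕ) < n := by
      rcases lt_or_eq_of_le (Nat.lt_succ_iff.1 k.isLt) with h | h
      · exact h
      · exact absurd (Fin.ext h : k = Fin.last n) hk
    have : n - (k : ℕ) ≠ 0 := by omega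
    simp [Bw, zero_pow this]
  · simp

lemma sign_cases' {x : ℝ} (hx : x ≠ 0) : Real.sign x = 1 ∨ Real.sign x = -1 := by
  rcases lt_trichotomy x 0 with h | h | h
  · exact Or.inr (Real.sign_of_neg h)
  · exact absurd h hx
  · exact Or.inl (Real.sign_of_pos h)

lemma sign_mul_pos' {x : ℝ} (hx : x ≠ 0) : 0 < Real.sign x * x := by
  rcases lt_trichotomy x 0 with h | h | h
  · rw [Real.sign_of_neg h]; nlinarith
  · exact absurd h hx
  · rw [Real.sign_of_pos h]; nlinarith

lemma abs_eq_sign_mul {s x : ℝ} (hs : s = 1 ∨ s = -1) (h : 0 < s * x) : |x| = s * x := by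
  rcases hs with rfl | rfl
  · rw [one_mul] at h ⊢; exact abs_of_pos h
  · have : x < 0 := by nlinarith
    rw [abs_of_neg this]; ring

lemma sign_mul_le_abs {s y : ℝ} (hs : s = 1 ∨ s = -1) : s * y ≤ |y| := by
  rcases hs with rfl | rfl
  · rw [one_mul]; exact le_abs_self y
  · rw [neg_one_mul]; exact neg_le_abs y

lemma perturb (n : ℕ) (a d : Fin (n+1) → ℝ) (M : ℝ)
    (hM : ∀ p ∈ Set.Icc (0:ℝ) 1, penalty n a p ≤ M)
    (hbox : ∃ ε₀ > 0, ∀ ε, 0 < ε → ε ≤ ε₀ → ∀ k, a k + ε * d k ∈ Set.Icc (0:ℝ) 1)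
    (hS : ∀ p ∈ Set.Icc (0:ℝ) 1, penalty n a p = M →
      (∀ k, p ≠ a k) ∧ 0 < ∑ k, Real.sign (p - a k) * Bw n k p * d k) :
    ∃ b : Fin (n+1) → ℝ, (∀ k, b k ∈ Set.Icc (0:ℝ) 1) ∧
      sSup ((fun p => penalty n b p) '' Set.Icc (0:ℝ) 1) < M := by
  classical
  obtain ⟨ε₀, hε₀, hbox⟩ := hbox
  set Icc01 := Set.Icc (0:ℝ) 1 with hIcc
  have key : ∀ p ∈ Icc01, ∃ (ε₁ : ℝ) (V : Set ℝ), 0 < ε₁ ∧ IsOpen V ∧ p ∈ V ∧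
      ∀ q ∈ V, q ∈ Icc01 → ∀ ε, 0 < ε → ε ≤ ε₁ →
        penalty n (fun k => a k + ε * d k) q < M := by
    intro p hp
    set F : ℝ × ℝ → ℝ := fun z => ∑ k, Bw n k z.2 * |z.2 - (a k + z.1 * d k)| with hF
    have hFcont : Continuous F := by
      apply continuous_finset_sum
      intro k _
      have h1 : Continuous (fun z : ℝ × ℝ => Bw n k z.2) := by
        unfold Bw; fun_prop
      have h2 : Continuous (fun z : ℝ × ℝ => |z.2 - (a k + z.1 * d k)|) := by fun_prop
      exact h1.mul h2
    have hFpen : ∀ ε q, F (ε, q) = penalty n (fun k => a k + ε * d k) q := by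
      intro ε q; rw [penalty_eq_B]
    rcases lt_or_eq_of_le (hM p hp) with hlt | heq
    · have hopen : IsOpen (F ⁻¹' Set.Iio M) := (isOpen_Iio).preimage hFcont
      have hmem : ((0:ℝ), p) ∈ F ⁻¹' Set.Iio M := by
        have : F (0, p) = penalty n a p := by
          rw [hFpen]; congr 1; funext k; ring_nf
        simpa [Set.mem_preimage, this] using hlt
      rcases isOpen_prod_iff.1 hopen 0 p hmem with ⟨U1, U2, hU1, hU2, h0U1, hpU2, hsub⟩
      rcases Metric.isOpen_iff.1 hU1 0 h0U1 with ⟨δ, hδ, hball⟩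
      refine ⟨δ/2, U2, by linarith, hU2, hpU2, ?_⟩
      intro q hq hqI ε hε hεle
      have : (ε, q) ∈ U1 ×ˢ U2 := by
        refine ⟨hball ?_, hq⟩
        simp only [Metric.mem_ball, Real.dist_eq, sub_zero]
        rw [abs_of_pos hε]; linarith
      have := hsub this
      rw [Set.mem_preimage, Set.mem_Iio, hFpen] at this
      exact this
    · obtain ⟨hne, hpos⟩ := hS p hp heq
      set s : Fin (n+1) → ℝ := fun k => Real.sign (p - a k) with hs
      have hsc : ∀ k, s k = 1 ∨ s k = -1 := by
        intro k; exact sign_cases' (sub_ne_zero_of_ne (hne k))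
      set c := ∑ k, s k * Bw n k p * d k with hc
      set W : Set (ℝ × ℝ) :=
        {z | (∀ k, 0 < s k * (z.2 - (a k + z.1 * d k))) ∧
          c/2 < ∑ k, s k * Bw n k z.2 * d k} with hW
      have hWopen : IsOpen W := by
        have h1 : IsOpen {z : ℝ × ℝ | ∀ k, 0 < s k * (z.2 - (a k + z.1 * d k))} := by
          rw [Set.setOf_forall]
          apply isOpen_iInter_of_finite
          intro k
          have : Continuous (fun z : ℝ × ℝ => s k * (z.2 - (a k + z.1 * d k))) := by fun_prop
          exact isOpen_lt continuous_const this
        have h2 : IsOpen {z : ℝ × ℝ | c/2 < ∑ k, s k * Bw n k z.2 * d k} := by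
          have : Continuous (fun z : ℝ × ℝ => ∑ k, s k * Bw n k z.2 * d k) := by
            apply continuous_finset_sum
            intro k _
            have : Continuous (fun z : ℝ × ℝ => Bw n k z.2) := by unfold Bw; fun_prop
            fun_prop
          exact isOpen_lt continuous_const this
        exact h1.inter h2
      have hWmem : ((0:ℝ), p) ∈ W := by
        constructor
        · intro k
          have : (0:ℝ) * d k = 0 := zero_mul _
          simpa [this] using sign_mul_pos' (sub_ne_zero_of_ne (hne k))
        · exact half_lt_self hpos
      rcases isOpen_prod_iff.1 hWopen 0 p hWmem with ⟨U1, U2, hU1, hU2, h0U1, hpU2, hsub⟩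
      rcases Metric.isOpen_iff.1 hU1 0 h0U1 with ⟨δ, hδ, hball⟩
      refine ⟨δ/2, U2, by linarith, hU2, hpU2, ?_⟩
      intro q hq hqI ε hε hεle
      have hmemW : (ε, q) ∈ W := by
        apply hsub
        refine ⟨hball ?_, hq⟩
        simp only [Metric.mem_ball, Real.dist_eq, sub_zero]
        rw [abs_of_pos hε]; linarith
      obtain ⟨hsgn, hSq⟩ := hmemW
      rw [← hFpen]
      have step1 : F (ε, q) = ∑ k, Bw n k q * (s k * (q - (a k + ε * d k))) := by
        apply Finset.sum_congr rfl
        intro k _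
        rw [abs_eq_sign_mul (hsc k) (hsgn k)]
      have step2 : F (ε, q) =
          (∑ k, Bw n k q * (s k * (q - a k))) - ε * ∑ k, s k * Bw n k q * d k := by
        rw [step1, Finset.mul_sum, ← Finset.sum_sub_distrib]
        apply Finset.sum_congr rfl
        intro k _; ring
      have hterm : ∀ k ∈ univ, Bw n k q * (s k * (q - a k)) ≤ Bw n k q * |q - a k| := by
        intro k _
        exact mul_le_mul_of_nonneg_left (sign_mul_le_abs (hsc k)) (Bw_nonneg n k hqI)
      have hsum : (∑ k, Bw n k q * (s k * (q - a k))) ≤ penalty n a q := by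
        rw [penalty_eq_B]; exact Finset.sum_le_sum hterm
      have hc2 : 0 < ε * (c/2) := by positivity
      have : F (ε, q) < penalty n a q := by
        rw [step2]
        have := mul_lt_mul_of_pos_left hSq hε
        nlinarith [hM q hqI]
      exact lt_of_lt_of_le this (hM q hqI)
  choose! εf Vf hεf hVopen hVmem hVprop using key
  have hnhds : ∀ p ∈ Icc01, Vf p ∈ nhds p := fun p hp =>
    (hVopen p hp).mem_nhds (hVmem p hp)
  obtain ⟨t, htI, hcover⟩ := isCompact_Icc.elim_nhds_subcover Vf hnhds
  have htne : t.Nonempty := by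
    by_contra hemp
    rw [Finset.not_nonempty_iff_eq_empty] at hemp
    have h0 : (0:ℝ) ∈ Icc01 := by constructor <;> norm_num
    have := hcover h0
    simp [hemp] at this
  set ε' := min (t.inf' htne εf) ε₀ with hε'
  have hε'pos : 0 < ε' := by
    apply lt_min _ hε₀
    rw [Finset.lt_inf'_iff]
    intro b hb
    exact hεf b (htI b hb)
  refine ⟨fun k => a k + ε' * d k, hbox ε' hε'pos (min_le_right _ _), ?_⟩
  obtain ⟨x, hx, _, hsup⟩ := exists_sSup_max (penalty_cont n (fun k => a k + ε' * d k))
  rw [hsup]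
  have := hcover hx
  rw [Set.mem_iUnion₂] at this
  obtain ⟨p, hpt, hxV⟩ := this
  exact hVprop p (htI p hpt) x hxV hx ε' hε'pos
    (le_trans (min_le_left _ _) (Finset.inf'_le εf hpt))

lemma kink_lt (n : ℕ) (a : Fin (n+1) → ℝ) (M : ℝ)
    (hM : ∀ p ∈ Set.Icc (0:ℝ) 1, penalty n a p ≤ M)
    (k : Fin (n+1)) (hne : ∀ j, j ≠ k → a j ≠ a k) (hc0 : 0 < a k) (hc1 : a k < 1) :
    penalty n a (a k) < M := by
  classical
  set c := a k with hcdef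
  set β := Bw n k c with hβ
  have hβpos : 0 < β := by
    have hkn : (k:ℕ) ≤ n := Nat.lt_succ_iff.1 k.isLt
    have hch := Nat.choose_pos hkn
    have h1c : (0:ℝ) < 1 - c := by linarith
    rw [hβ]
    unfold Bw
    have : (0:ℝ) < (n.choose (k:ℕ) : ℝ) := by exact_mod_cast hch
    positivity
  set g : ℝ → ℝ := fun p => ∑ j ∈ univ.erase k, Bw n j p * |p - a j| with hg
  have hpen : ∀ p, penalty n a p = g p + Bw n k p * |p - a k| := by
    intro p
    rw [penalty_eq_B, ← Finset.sum_erase_add univ _ (mem_univ k)]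
  have hdiff : DifferentiableAt ℝ g c := by
    apply DifferentiableAt.fun_sum
    intro j hj
    have hj' : a j ≠ c := hne j (Finset.ne_of_mem_erase hj)
    set s := Real.sign (c - a j) with hs
    have hsc : s = 1 ∨ s = -1 := sign_cases' (sub_ne_zero_of_ne (Ne.symm hj'))
    have heq : (fun p => Bw n j p * |p - a j|) =ᶠ[nhds c]
        (fun p => Bw n j p * (s * (p - a j))) := by
      have hopen : IsOpen {p : ℝ | 0 < s * (p - a j)} := by
        apply isOpen_lt continuous_const; fun_prop
      have hmem : c ∈ {p : ℝ | 0 < s * (p - a j)} :=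
        sign_mul_pos' (sub_ne_zero_of_ne (Ne.symm hj'))
      filter_upwards [hopen.mem_nhds hmem] with p hp
      rw [abs_eq_sign_mul hsc hp]
    rw [Filter.EventuallyEq.differentiableAt_iff heq]
    have : DifferentiableAt ℝ (fun p : ℝ => Bw n j p) c := by unfold Bw; fun_prop
    fun_prop
  set L := deriv g c with hL
  have hder : HasDerivAt g L c := hdiff.hasDerivAt
  rw [hasDerivAt_iff_isLittleO] at hder
  have htendP : Filter.Tendsto (fun t : ℝ => c + t) (nhdsWithin 0 (Set.Ioi 0)) (nhds c) := by
    apply Filter.Tendsto.mono_left _ nhdsWithin_le_nhds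
    have : Filter.Tendsto (fun t : ℝ => c + t) (nhds 0) (nhds (c + 0)) :=
      (continuous_const.add continuous_id).tendsto 0
    simpa using this
  have htendM : Filter.Tendsto (fun t : ℝ => c - t) (nhdsWithin 0 (Set.Ioi 0)) (nhds c) := by
    apply Filter.Tendsto.mono_left _ nhdsWithin_le_nhds
    have : Filter.Tendsto (fun t : ℝ => c - t) (nhds 0) (nhds (c - 0)) :=
      (continuous_const.sub continuous_id).tendsto 0
    simpa using this
  have hoP := (hder.comp_tendsto htendP).def (show (0:ℝ) < β/8 by positivity)
  have hoM := (hder.comp_tendsto htendM).def (show (0:ℝ) < β/8 by positivity)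
  simp only [Function.comp] at hoP hoM
  have hBcont : Filter.Tendsto (fun t : ℝ => Bw n k (c + t) + Bw n k (c - t))
      (nhdsWithin 0 (Set.Ioi 0)) (nhds (2*β)) := by
    apply Filter.Tendsto.mono_left _ nhdsWithin_le_nhds
    have hB : Continuous (Bw n k) := by unfold Bw; fun_prop
    have : Filter.Tendsto (fun t : ℝ => Bw n k (c + t) + Bw n k (c - t)) (nhds 0)
        (nhds (Bw n k (c + 0) + Bw n k (c - 0))) := by
      apply Filter.Tendsto.add
      · exact (hB.tendsto _).comp ((continuous_const.add continuous_id).tendsto 0)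
      · exact (hB.tendsto _).comp ((continuous_const.sub continuous_id).tendsto 0)
    simpa [two_mul] using this
  have hBev : ∀ᶠ t in nhdsWithin 0 (Set.Ioi 0), β < Bw n k (c+t) + Bw n k (c-t) :=
    hBcont.eventually (lt_mem_nhds (by linarith))
  have hsmall : ∀ᶠ t in nhdsWithin 0 (Set.Ioi 0), t < min c (1 - c) := by
    apply Filter.Eventually.filter_mono nhdsWithin_le_nhds
    have : Set.Ioo (-(min c (1-c))) (min c (1-c)) ∈ nhds (0:ℝ) := by
      apply Ioo_mem_nhds
      · simp only [neg_neg, Left.neg_neg_iff]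
        exact lt_min hc0 (by linarith)
      · exact lt_min hc0 (by linarith)
    filter_upwards [this] with t ht
    exact ht.2
  have hpos : ∀ᶠ t in nhdsWithin (0:ℝ) (Set.Ioi 0), 0 < t := self_mem_nhdsWithin
  obtain ⟨t, hP, hQ, hB2, hsm, htpos⟩ :=
    (hoP.and (hoM.and (hBev.and (hsmall.and hpos)))).exists
  have htc : t < c := lt_of_lt_of_le hsm (min_le_left _ _)
  have ht1 : c + t ≤ 1 := by
    have : t < 1 - c := lt_of_lt_of_le hsm (min_le_right _ _)
    linarith
  have hIccP : c + t ∈ Set.Icc (0:ℝ) 1 := ⟨by linarith, ht1⟩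
  have hIccM : c - t ∈ Set.Icc (0:ℝ) 1 := ⟨by linarith, by linarith⟩
  have habs : |t| = t := abs_of_pos htpos
  have eP : |g (c + t) - g c - t * L| ≤ β/8 * t := by
    have := hP
    simp only [add_sub_cancel_left, smul_eq_mul, Real.norm_eq_abs] at this
    rwa [habs] at this
  have eM : |g (c - t) - g c + t * L| ≤ β/8 * t := by
    have := hQ
    simp only [sub_sub_cancel_left, smul_eq_mul, Real.norm_eq_abs, abs_neg] at this
    rw [habs] at this
    have heq : g (c - t) - g c - -t * L = g (c - t) - g c + t * L := by ring
    rwa [heq] at this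
  have aP := abs_le.1 eP
  have aM := abs_le.1 eM
  have hpenP : penalty n a (c + t) = g (c + t) + Bw n k (c + t) * t := by
    rw [hpen]
    congr 1
    rw [← hcdef]
    have : |c + t - c| = t := by rw [add_sub_cancel_left, habs]
    rw [this]
  have hpenM : penalty n a (c - t) = g (c - t) + Bw n k (c - t) * t := by
    rw [hpen]
    congr 1
    rw [← hcdef]
    have : |c - t - c| = t := by
      rw [sub_sub_cancel_left, abs_neg, habs]
    rw [this]
  have hpenc : penalty n a c = g c := by
    rw [hpen, ← hcdef, sub_self, abs_zero, mul_zero, add_zero]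
  have hMub1 := hM _ hIccP
  have hMub2 := hM _ hIccM
  rw [hpenP] at hMub1
  rw [hpenM] at hMub2
  rw [hpenc]
  have hprod : β * t < (Bw n k (c+t) + Bw n k (c-t)) * t :=
    mul_lt_mul_of_pos_right hB2 htpos
  nlinarith [hβpos, htpos]

lemma choose_key (n I : ℕ) (hI : I < n) :
    ((n.choose (I+1) : ℝ)) * ((I:ℝ)+1) = (n.choose I : ℝ) * ((n:ℝ) - I) := by
  have h := Nat.choose_succ_right_eq n I
  have h' := congrArg (Nat.cast : ℕ → ℝ) h
  push_cast [Nat.cast_sub hI.le] at h'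
  linarith

lemma hkey_lemma (n I : ℕ) (hI : I < n) (p : ℝ) :
    ((I:ℝ)+1) * (1-p) * ((n.choose (I+1) : ℝ) * p^(I+1) * (1-p)^(n-(I+1)))
      = ((n:ℝ)-(I:ℝ)) * p * ((n.choose I : ℝ) * p^I * (1-p)^(n-I)) := by
  have h1 : n - I = (n - (I+1)) + 1 := by omega
  have h2 := choose_key n I hI
  rw [h1, pow_succ, pow_succ]
  linear_combination (p^I * p * (1-p) * (1-p)^(n-(I+1))) * h2

lemma main_low (n I : ℕ) (hI : I < n) (x y p : ℝ)
    (hp0 : 0 ≤ p) (hp1 : p < 1) (hpx : p ≤ x) (hxy : x < y) :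
    ((n:ℝ)-I)*((y-x)/2) * ((n.choose I : ℝ) * p^I * (1-p)^(n-I)) ≤
      ((n:ℝ)-I)*((x+y)/2) * ((n.choose I : ℝ) * p^I * (1-p)^(n-I))
        - ((I:ℝ)+1)*(1-(x+y)/2) * ((n.choose (I+1) : ℝ) * p^(I+1) * (1-p)^(n-(I+1))) := by
  set Bi := (n.choose I : ℝ) * p^I * (1-p)^(n-I) with hBi
  set Bs := (n.choose (I+1) : ℝ) * p^(I+1) * (1-p)^(n-(I+1)) with hBs
  set w : ℝ := (x+y)/2 with hw
  have hkey := hkey_lemma n I hI p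
  rw [← hBi, ← hBs] at hkey
  have hBinn : 0 ≤ Bi := by
    rw [hBi]
    have h1 : (0:ℝ) ≤ 1 - p := by linarith
    positivity
  have hfac : (0:ℝ) < ((I:ℝ)+1) * (1-p) := by
    have : (0:ℝ) ≤ (I:ℝ) := Nat.cast_nonneg I
    nlinarith
  have hid : ((I:ℝ)+1)*(1-p)*(((n:ℝ)-I)*w*Bi - ((I:ℝ)+1)*(1-w)*Bs)
      = ((I:ℝ)+1)*((n:ℝ)-I)*(w-p)*Bi := by
    linear_combination (-(((I:ℝ)+1)*(1-w))) * hkey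
  have hnI : (0:ℝ) ≤ (n:ℝ) - I := by
    have : (I:ℝ) < (n:ℝ) := by exact_mod_cast hI
    linarith
  apply le_of_mul_le_mul_left _ hfac
  rw [hid]
  have hcoef : (1-p)*((y-x)/2) ≤ w - p := by nlinarith
  have hI0 : (0:ℝ) ≤ (I:ℝ)+1 := by positivity
  nlinarith [mul_nonneg (mul_nonneg hI0 hnI) hBinn, mul_nonneg hnI hBinn,
    mul_le_mul_of_nonneg_left hcoef (mul_nonneg (mul_nonneg hI0 hnI) hBinn)]

lemma main_high (n I : ℕ) (hI : I < n) (x y p : ℝ)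
    (hx0 : 0 ≤ x) (hp1 : p ≤ 1) (hyp : y ≤ p) (hxy : x < y) :
    ((I:ℝ)+1)*((y-x)/2) * ((n.choose (I+1) : ℝ) * p^(I+1) * (1-p)^(n-(I+1))) ≤
      ((I:ℝ)+1)*(1-(x+y)/2) * ((n.choose (I+1) : ℝ) * p^(I+1) * (1-p)^(n-(I+1)))
        - ((n:ℝ)-I)*((x+y)/2) * ((n.choose I : ℝ) * p^I * (1-p)^(n-I)) := by
  set Bi := (n.choose I : ℝ) * p^I * (1-p)^(n-I) with hBi
  set Bs := (n.choose (I+1) : ℝ) * p^(I+1) * (1-p)^(n-(I+1)) with hBs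
  set w : ℝ := (x+y)/2 with hw
  have hkey := hkey_lemma n I hI p
  rw [← hBi, ← hBs] at hkey
  have hp0 : 0 < p := by linarith
  have hBsnn : 0 ≤ Bs := by
    rw [hBs]
    have h1 : (0:ℝ) ≤ 1 - p := by linarith
    positivity
  have hnI : (0:ℝ) < (n:ℝ) - I := by
    have : (I:ℝ) < (n:ℝ) := by exact_mod_cast hI
    linarith
  have hfac : (0:ℝ) < ((n:ℝ)-I) * p := by positivity
  have hid : ((n:ℝ)-I)*p*(((I:ℝ)+1)*(1-w)*Bs - ((n:ℝ)-I)*w*Bi)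
      = ((I:ℝ)+1)*((n:ℝ)-I)*(p-w)*Bs := by
    linear_combination (((n:ℝ)-I)*w) * hkey
  apply le_of_mul_le_mul_left _ hfac
  rw [hid]
  have hcoef : p*((y-x)/2) ≤ p - w := by nlinarith
  have hI0 : (0:ℝ) ≤ (I:ℝ)+1 := by positivity
  nlinarith [mul_nonneg (mul_nonneg hI0 hnI.le) hBsnn,
    mul_le_mul_of_nonneg_left hcoef (mul_nonneg (mul_nonneg hI0 hnI.le) hBsnn)]

set_option maxHeartbeats 3200000 in
theorem stmt_7 (n : ℕ) (hn : 0 < n) (a : Fin (n+1) → ℝ) (ha : IsOptimal n a)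
    (hmono : StrictMono a) :
    ∀ i : Fin n, ∃ x, a i.castSucc < x ∧ x < a i.succ ∧
      penalty n a x = sSup ((fun p => penalty n a p) '' Set.Icc (0:ℝ) 1) := by
  classical
  intro i
  by_contra hcon
  push_neg at hcon
  set M := sSup ((fun p => penalty n a p) '' Set.Icc (0:ℝ) 1) with hMdef
  obtain ⟨x0, hx00, hub0, hsup0⟩ := exists_sSup_max (penalty_cont n a)
  have hub : ∀ p ∈ Set.Icc (0:ℝ) 1, penalty n a p ≤ M := by
    intro p hp; rw [hMdef, hsup0]; exact hub0 p hp
  have hbox := ha.1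
  -- M > 0
  have hMpos : 0 < M := by
    set j1 : Fin (n+1) := ⟨1, by omega⟩ with hj1
    have h01 : a 0 < a j1 := by
      apply hmono
      rw [Fin.lt_def]
      simp [hj1]
    set p₀ := (a 0 + a j1)/2 with hp₀
    have hp₀I : p₀ ∈ Set.Icc (0:ℝ) 1 := by
      constructor
      · have := (hbox 0).1; rw [hp₀]; linarith
      · have := (hbox j1).2; rw [hp₀]; linarith
    have hp₀1 : p₀ < 1 := by
      have := (hbox j1).2; rw [hp₀]; linarith
    have hsingle : Bw n 0 p₀ * |p₀ - a 0| ≤ penalty n a p₀ := by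
      rw [penalty_eq_B]
      exact Finset.single_le_sum (f := fun k => Bw n k p₀ * |p₀ - a k|)
        (fun k _ => mul_nonneg (Bw_nonneg n k hp₀I) (abs_nonneg _)) (mem_univ 0)
    have hB0v : Bw n 0 p₀ = (1-p₀)^n := by simp [Bw]
    have hBpos : 0 < Bw n 0 p₀ * |p₀ - a 0| := by
      rw [hB0v]
      have h1 : (0:ℝ) < 1 - p₀ := by linarith
      have h2 : 0 < |p₀ - a 0| := by
        rw [abs_pos, sub_ne_zero]
        intro h
        rw [hp₀] at h
        nlinarith [h01]
      positivity
    exact lt_of_lt_of_le hBpos (le_trans hsingle (hub p₀ hp₀I))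
  -- nodes are not maximizers
  have hnode : ∀ p ∈ Set.Icc (0:ℝ) 1, penalty n a p = M → ∀ k, p ≠ a k := by
    intro p hp hpM k heq
    have hak0 : 0 ≤ a k := (hbox k).1
    have hak1 : a k ≤ 1 := (hbox k).2
    by_cases h0 : a k = 0
    · -- then a 0 = 0 and penalty at 0 is 0
      have ha0 : a 0 = 0 := by
        have := hmono.monotone (Fin.zero_le k)
        have := (hbox 0).1
        linarith [h0 ▸ this]
      have : penalty n a p = 0 := by
        rw [heq, h0, penalty_zero, ha0, abs_zero]
      rw [hpM] at this; linarith
    · by_cases h1 : a k = 1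
      · have haN : a (Fin.last n) = 1 := by
          have := hmono.monotone (Fin.le_last k)
          have := (hbox (Fin.last n)).2
          linarith [h1 ▸ this]
        have : penalty n a p = 0 := by
          rw [heq, h1, penalty_one, haN, sub_self, abs_zero]
        rw [hpM] at this; linarith
      · have hc0 : 0 < a k := lt_of_le_of_ne hak0 (Ne.symm h0)
        have hc1 : a k < 1 := lt_of_le_of_ne hak1 h1
        have hne : ∀ j, j ≠ k → a j ≠ a k := fun j hj e => hj (hmono.injective e)
        have := kink_lt n a M hub k hne hc0 hc1
        rw [← heq, hpM] at this
        linarith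
  -- setup
  set I : ℕ := (i : ℕ) with hIdef
  have hIn : I < n := i.isLt
  set X := a i.castSucc with hX
  set Y := a i.succ with hY
  have hXY : X < Y := hmono Fin.castSucc_lt_succ
  have hX0 : 0 ≤ X := (hbox _).1
  have hY1 : Y ≤ 1 := (hbox _).2
  set w : ℝ := (X+Y)/2 with hw
  have hw0 : 0 < w := by rw [hw]; linarith
  have hw1 : w < 1 := by rw [hw]; linarith
  have hnI : (0:ℝ) < (n:ℝ) - I := by
    have : (I:ℝ) < (n:ℝ) := by exact_mod_cast hIn
    linarith
  have hI1 : (0:ℝ) < (I:ℝ) + 1 := by positivity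
  set lam : ℝ := if X = 0 then 0 else ((n:ℝ)-I)*w with hlam
  set mu : ℝ := if Y = 1 then 0 else ((I:ℝ)+1)*(1-w) with hmu
  set cm : ℝ := ((n:ℝ)-I)*((Y-X)/2) with hcm
  set cp : ℝ := ((I:ℝ)+1)*((Y-X)/2) with hcp
  have hcm0 : 0 < cm := by rw [hcm]; have : 0 < (Y-X)/2 := by linarith
                           positivity
  have hcp0 : 0 < cp := by rw [hcp]; have : 0 < (Y-X)/2 := by linarith
                           positivity
  set CI : ℝ := (n.choose I : ℝ) with hCI
  set CS : ℝ := (n.choose (I+1) : ℝ) with hCS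
  have hCIpos : 0 < CI := by
    rw [hCI]; exact_mod_cast Nat.choose_pos hIn.le
  have hCSpos : 0 < CS := by
    rw [hCS]; exact_mod_cast Nat.choose_pos hIn
  set a0 := a 0 with ha0d
  set aN := a (Fin.last n) with haNd
  have ha00 : 0 ≤ a0 := (hbox 0).1
  have haN1 : aN ≤ 1 := (hbox _).2
  set Pn : Prop := penalty n a 0 = M ∧ I ≠ 0 with hPn
  set Pk : Prop := penalty n a 1 = M ∧ I + 1 ≠ n with hPk
  have hPna0 : Pn → 0 < a0 ∧ a0 = M := by
    rintro ⟨hp0, -⟩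
    rw [penalty_zero, abs_of_nonneg ha00] at hp0
    exact ⟨by linarith [hMpos], hp0⟩
  have hPkaN : Pk → aN < 1 ∧ 1 - aN = M := by
    rintro ⟨hp1, -⟩
    rw [penalty_one] at hp1
    have : |1 - aN| = 1 - aN := abs_of_nonneg (by linarith)
    rw [← haNd, this] at hp1
    exact ⟨by linarith, hp1⟩
  set e1 : ℝ := (cm/4)*CI*(1-X)^(n-I) with he1
  set e2 : ℝ := (cm/2)*CI*a0^I with he2
  set e3 : ℝ := (cp/2)*CS*Y^(I+1) with he3
  set e4 : ℝ := (cp/4)*CS*Y^(I+1)*(1-aN)^(n-I-1) with he4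
  set nu : ℝ := if Pn then min e2 e3 else 0 with hnu
  set ka : ℝ := if Pk then min e1 e4 else 0 with hka
  have hY0 : 0 < Y := by linarith
  have hnu_nn : 0 ≤ nu := by
    rw [hnu]
    split
    · apply le_min
      · rw [he2]; positivity
      · rw [he3]; positivity
    · exact le_refl 0
  have hka_nn : 0 ≤ ka := by
    rw [hka]; split
    · rename_i hPk'
      have haN1' : aN < 1 := (hPkaN hPk').1
      apply le_min
      · rw [he1]
        have h' : (0:ℝ) < 1 - X := by linarith
        positivity
      · rw [he4]
        have h' : (0:ℝ) < 1 - aN := by linarith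
        positivity
    · exact le_refl 0
  have hlam_nn : 0 ≤ lam := by
    rw [hlam]; split
    · exact le_refl 0
    · positivity
  have hmu_nn : 0 ≤ mu := by
    rw [hmu]; split
    · exact le_refl 0
    · have h' : (0:ℝ) ≤ 1 - w := by linarith
      positivity
  set d : Fin (n+1) → ℝ := fun k =>
    (if k = i.castSucc then -lam else 0) + (if k = i.succ then mu else 0)
      + (if k = (0 : Fin (n+1)) then -nu else 0) + (if k = Fin.last n then ka else 0) with hd
  have hneg : ∀ k, d k < 0 → 0 < a k := by
    intro k hk
    by_contra hc
    push_neg at hc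
    have hak0 : a k = 0 := le_antisymm hc (hbox k).1
    have hz : 0 ≤ d k := by
      simp only [hd]
      have t1 : (0:ℝ) ≤ if k = i.castSucc then -lam else 0 := by
        split
        · rename_i h
          have hX0' : X = 0 := by rw [hX, ← h, hak0]
          rw [hlam, if_pos hX0']; norm_num
        · exact le_refl 0
      have t2 : (0:ℝ) ≤ if k = i.succ then mu else 0 := by
        split
        · exact hmu_nn
        · exact le_refl 0
      have t3 : (0:ℝ) ≤ if k = (0 : Fin (n+1)) then -nu else 0 := by
        split
        · rename_i h
          have ha0z : a0 = 0 := by rw [ha0d, ← h, hak0]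
          have hnPn : ¬ Pn := fun hP => by
            have := (hPna0 hP).1; rw [ha0z] at this; exact lt_irrefl 0 this
          rw [hnu, if_neg hnPn]; norm_num
        · exact le_refl 0
      have t4 : (0:ℝ) ≤ if k = Fin.last n then ka else 0 := by
        split
        · exact hka_nn
        · exact le_refl 0
      linarith
    exact absurd hz (not_le.2 hk)
  have hposd : ∀ k, 0 < d k → a k < 1 := by
    intro k hk
    by_contra hc
    push_neg at hc
    have hak1 : a k = 1 := le_antisymm (hbox k).2 hc
    have hz : d k ≤ 0 := by
      simp only [hd]
      have t1 : (if k = i.castSucc then -lam else 0) ≤ 0 := by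
        split
        · linarith
        · exact le_refl 0
      have t2 : (if k = i.succ then mu else 0) ≤ 0 := by
        split
        · rename_i h
          have hY1' : Y = 1 := by rw [hY, ← h, hak1]
          rw [hmu, if_pos hY1']
        · exact le_refl 0
      have t3 : (if k = (0 : Fin (n+1)) then -nu else 0) ≤ 0 := by
        split
        · linarith
        · exact le_refl 0
      have t4 : (if k = Fin.last n then ka else 0) ≤ 0 := by
        split
        · rename_i h
          have haN1' : aN = 1 := by rw [haNd, ← h, hak1]
          have hnPk : ¬ Pk := fun hP => by
            have := (hPkaN hP).1; rw [haN1'] at this; exact lt_irrefl 1 this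
          rw [hka, if_neg hnPk]
        · exact le_refl 0
      linarith
    exact absurd hz (not_le.2 hk)
  have hcoord : ∀ k, ∃ e, 0 < e ∧ ∀ ε, 0 < ε → ε ≤ e →
      a k + ε * d k ∈ Set.Icc (0:ℝ) 1 := by
    intro k
    rcases lt_trichotomy (d k) 0 with hdk | hdk | hdk
    · have hak := hneg k hdk
      have hdk' : 0 < -(d k) := by linarith
      refine ⟨a k / (-(d k)), div_pos hak hdk', fun ε hε hεe => ?_⟩
      constructor
      · have h2 : ε * -(d k) ≤ a k := (le_div_iff₀ hdk').1 hεe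
        have h3 : ε * -(d k) = -(ε * d k) := by ring
        rw [h3] at h2
        linarith
      · have h2 : ε * d k < 0 := mul_neg_of_pos_of_neg hε hdk
        linarith [(hbox k).2]
    · refine ⟨1, one_pos, fun ε hε hεe => ?_⟩
      have h2 : a k + ε * d k = a k := by rw [hdk]; ring
      rw [h2]; exact hbox k
    · have hak := hposd k hdk
      refine ⟨(1 - a k) / d k, div_pos (by linarith) hdk, fun ε hε hεe => ?_⟩
      constructor
      · have h2 : 0 < ε * d k := mul_pos hε hdk
        linarith [(hbox k).1]
      · have h2 : ε * d k ≤ 1 - a k := (le_div_iff₀ hdk).1 hεe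
        linarith
  choose ef hef1 hef2 using hcoord
  have hboxd : ∃ ε₀ > 0, ∀ ε, 0 < ε → ε ≤ ε₀ → ∀ k, a k + ε * d k ∈ Set.Icc (0:ℝ) 1 := by
    refine ⟨Finset.univ.inf' Finset.univ_nonempty ef, ?_, ?_⟩
    · exact (Finset.lt_inf'_iff _).mpr fun k _ => hef1 k
    · intro ε hε hεle k
      exact hef2 k ε hε (le_trans hεle (Finset.inf'_le _ (mem_univ k)))
  have hS : ∀ p ∈ Set.Icc (0:ℝ) 1, penalty n a p = M →
      (∀ k, p ≠ a k) ∧ 0 < ∑ k, Real.sign (p - a k) * Bw n k p * d k := by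
    intro p hp hpM
    have hpk := hnode p hp hpM
    refine ⟨hpk, ?_⟩
    have hp0 : 0 ≤ p := hp.1
    have hp1 : p ≤ 1 := hp.2
    have hrange : p < X ∨ Y < p := by
      by_contra hr
      push_neg at hr
      obtain ⟨h1, h2⟩ := hr
      rcases lt_or_eq_of_le h1 with h1' | h1'
      · rcases lt_or_eq_of_le h2 with h2' | h2'
        · exact hcon p h1' h2' hpM
        · exact hpk i.succ (by rw [← hY]; exact h2')
      · exact hpk i.castSucc (by rw [← hX]; exact h1'.symm)
    have hsum : (∑ k, Real.sign (p - a k) * Bw n k p * d k) =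
        Real.sign (p - X) * Bw n i.castSucc p * (-lam)
        + Real.sign (p - Y) * Bw n i.succ p * mu
        + Real.sign (p - a0) * Bw n 0 p * (-nu)
        + Real.sign (p - aN) * Bw n (Fin.last n) p * ka := by
      simp only [hd, mul_add, Finset.sum_add_distrib, mul_ite, mul_zero,
        Finset.sum_ite_eq', Finset.mem_univ, if_true, hX, hY, ha0d, haNd]
    have hBi : Bw n i.castSucc p = CI * p^I * (1-p)^(n-I) := by
      simp only [Bw, Fin.coe_castSucc, ← hIdef, ← hCI]
    have hBs : Bw n i.succ p = CS * p^(I+1) * (1-p)^(n-(I+1)) := by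
      simp only [Bw, Fin.val_succ, ← hIdef, ← hCS]
    have hB0 : Bw n 0 p = (1-p)^n := by simp [Bw]
    have hBN : Bw n (Fin.last n) p = p^n := by simp [Bw]
    have h1p : (0:ℝ) ≤ 1 - p := by linarith only [hp1]
    have hIle : I ≤ n := hIn.le
    have hX1 : X < 1 := by linarith only [hXY, hY1]
    rw [hsum, hBi, hBs, hB0, hBN]
    rcases hrange with hlt | hgt
    · -- CASE p < X
      have hXpos : 0 < X := lt_of_le_of_lt hp0 hlt
      have hp1s : p < 1 := by linarith only [hlt, hX1]
      have hsX : Real.sign (p - X) = -1 := Real.sign_of_neg (by linarith only [hlt])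
      have hsY : Real.sign (p - Y) = -1 := Real.sign_of_neg (by linarith only [hlt, hXY])
      have hXaN : X ≤ aN := by
        rw [hX, haNd]; exact hmono.monotone (Fin.le_last _)
      have hsN : Real.sign (p - aN) = -1 := Real.sign_of_neg (by linarith only [hlt, hXaN])
      have hlam_eq : lam = ((n:ℝ)-I)*w := by
        rw [hlam, if_neg (ne_of_gt hXpos)]
      rw [hsX, hsY, hsN]
      by_cases hpz : p = 0
      · subst hpz
        by_cases hI0 : I = 0
        · have hCI1 : CI = 1 := by rw [hCI, hI0, Nat.choose_zero_right, Nat.cast_one]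
          have hlampos : 0 < lam := by
            rw [hlam_eq]
            have : (0:ℝ) < (n:ℝ) - I := hnI
            positivity
          have hnu0 : nu = 0 := by
            rw [hnu, if_neg]
            rw [hPn]
            rintro ⟨-, hI⟩
            exact hI hI0
          simp only [hI0, pow_zero, zero_pow (by omega : n ≠ 0),
            zero_pow (by omega : 0 + 1 ≠ 0), hnu0, hCI1]
          ring_nf
          linarith only [hlampos, mul_pos hlampos hCIpos]
        · have hPn' : Pn := by rw [hPn]; exact ⟨hpM, hI0⟩
          obtain ⟨ha0pos, -⟩ := hPna0 hPn'
          have hnupos : 0 < nu := by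
            rw [hnu, if_pos hPn']
            apply lt_min
            · rw [he2]; positivity
            · rw [he3]; positivity
          have hs0 : Real.sign ((0:ℝ) - a0) = -1 := Real.sign_of_neg (by linarith only [ha0pos])
          simp only [hs0, zero_pow hI0, zero_pow (by omega : I + 1 ≠ 0),
            zero_pow (by omega : n ≠ 0)]
          ring_nf
          linarith only [hnupos]
      · -- 0 < p
        have hppos : 0 < p := lt_of_le_of_ne hp0 (Ne.symm hpz)
        have hBipos : 0 < CI * p^I * (1-p)^(n-I) := by
          have h1ppos : (0:ℝ) < 1 - p := by linarith
          positivity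
        have hA : cm * (CI * p^I * (1-p)^(n-I)) ≤
            lam * (CI * p^I * (1-p)^(n-I)) - mu * (CS * p^(I+1) * (1-p)^(n-(I+1))) := by
          have hml := main_low n I hIn X Y p hp0 hp1s hlt.le hXY
          rw [← hCI, ← hCS] at hml
          by_cases hY1' : Y = 1
          · rw [hmu, if_pos hY1', hlam_eq, hcm, hw]
            have hcoef : ((n:ℝ)-I)*((Y-X)/2) ≤ ((n:ℝ)-I)*((X+Y)/2) := by
              have := mul_nonneg hnI.le hX0
              linarith only [this]
            have := mul_le_mul_of_nonneg_right hcoef hBipos.le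
            linarith only [this]
          · rw [hmu, if_neg hY1', hlam_eq, hcm, hw]
            exact hml
        have hB' : ka * p^n ≤ (cm/4) * (CI * p^I * (1-p)^(n-I)) := by
          by_cases hPk' : Pk
          · have haN1' : aN < 1 := (hPkaN hPk').1
            have hka_le : ka ≤ e1 := by rw [hka, if_pos hPk']; exact min_le_left _ _
            have he1nn : 0 ≤ e1 := by
              rw [he1]
              have h1X : (0:ℝ) ≤ 1 - X := by linarith
              positivity
            have hpI : 0 ≤ p^I := pow_nonneg hp0 _
            have c1 : p^n = p^I * p^(n-I) := by rw [← pow_add]; congr 1; omega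
            have c5 : p^(n-I) ≤ 1 := pow_le_one₀ hp0 hp1
            have c4 : (1-X)^(n-I) ≤ (1-p)^(n-I) :=
              pow_le_pow_left₀ (by linarith only [hX1]) (by linarith only [hlt]) _
            calc ka * p^n = ka * (p^I * p^(n-I)) := by rw [c1]
              _ ≤ e1 * (p^I * p^(n-I)) :=
                  mul_le_mul_of_nonneg_right hka_le (by positivity)
              _ ≤ e1 * (p^I * 1) := by
                  apply mul_le_mul_of_nonneg_left _ he1nn
                  exact mul_le_mul_of_nonneg_left c5 hpI
              _ = (cm/4) * CI * ((1-X)^(n-I) * p^I) := by rw [he1]; ring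
              _ ≤ (cm/4) * CI * ((1-p)^(n-I) * p^I) := by
                  apply mul_le_mul_of_nonneg_left (mul_le_mul_of_nonneg_right c4 hpI)
                  positivity
              _ = (cm/4) * (CI * p^I * (1-p)^(n-I)) := by ring
          · rw [hka, if_neg hPk', zero_mul]
            positivity
        have hC : -((cm/2) * (CI * p^I * (1-p)^(n-I))) ≤
            Real.sign (p - a0) * ((1-p)^n) * (-nu) := by
          rcases lt_or_gt_of_ne (hpk 0) with hpa0 | hpa0
          · -- p < a 0
            have hs0 : Real.sign (p - a0) = -1 := Real.sign_of_neg (by rw [ha0d]; linarith only [hpa0])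
            rw [hs0]
            have h2 : (0:ℝ) ≤ (1-p)^n * nu := mul_nonneg (by positivity) hnu_nn
            have h3 := mul_nonneg (le_of_lt hcm0) hBipos.le
            linarith only [h2, h3]
          · -- a 0 < p
            have hs0 : Real.sign (p - a0) = 1 := Real.sign_of_pos (by rw [ha0d]; linarith only [hpa0])
            rw [hs0]
            have hgoal : nu * (1-p)^n ≤ (cm/2) * (CI * p^I * (1-p)^(n-I)) := by
              by_cases hPn' : Pn
              · obtain ⟨ha0pos, -⟩ := hPna0 hPn'
                have hnu_le : nu ≤ e2 := by rw [hnu, if_pos hPn']; exact min_le_left _ _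
                have he2nn : 0 ≤ e2 := by rw [he2]; positivity
                have c1 : (1-p)^n = (1-p)^I * (1-p)^(n-I) := by
                  rw [← pow_add]; congr 1; omega
                have c2 : (1-p)^I ≤ 1 := pow_le_one₀ h1p (by linarith only [hp0])
                have c3 : a0^I ≤ p^I := by
                  apply pow_le_pow_left₀ ha0pos.le
                  rw [ha0d]; linarith only [hpa0]
                have hpnn : 0 ≤ (1-p)^(n-I) := pow_nonneg h1p _
                calc nu * (1-p)^n = nu * ((1-p)^I * (1-p)^(n-I)) := by rw [c1]
                  _ ≤ e2 * ((1-p)^I * (1-p)^(n-I)) :=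
                      mul_le_mul_of_nonneg_right hnu_le (by positivity)
                  _ ≤ e2 * (1 * (1-p)^(n-I)) := by
                      apply mul_le_mul_of_nonneg_left _ he2nn
                      exact mul_le_mul_of_nonneg_right c2 hpnn
                  _ = (cm/2) * CI * (a0^I * (1-p)^(n-I)) := by rw [he2]; ring
                  _ ≤ (cm/2) * CI * (p^I * (1-p)^(n-I)) := by
                      apply mul_le_mul_of_nonneg_left (mul_le_mul_of_nonneg_right c3 hpnn)
                      positivity
                  _ = (cm/2) * (CI * p^I * (1-p)^(n-I)) := by ring
              · rw [hnu, if_neg hPn', zero_mul]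
                positivity
            linarith only [hgoal]
        have hD : 0 < cm * (CI * p^I * (1-p)^(n-I)) := mul_pos hcm0 hBipos
        linarith only [hA, hB', hC, hD]
    · -- CASE Y < p
      have hY1' : Y < 1 := lt_of_lt_of_le hgt hp1
      have hsX : Real.sign (p - X) = 1 := Real.sign_of_pos (by linarith only [hgt, hXY])
      have hsY : Real.sign (p - Y) = 1 := Real.sign_of_pos (by linarith only [hgt])
      have ha0X : a0 ≤ X := by
        rw [ha0d, hX]; exact hmono.monotone (Fin.zero_le _)
      have hs0 : Real.sign (p - a0) = 1 :=
        Real.sign_of_pos (by linarith only [hgt, hXY, ha0X])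
      have hmu_eq : mu = ((I:ℝ)+1)*(1-w) := by rw [hmu, if_neg (ne_of_lt hY1')]
      rw [hsX, hsY, hs0]
      by_cases hpo : p = 1
      · subst hpo
        have haNlt : aN < 1 := by
          apply lt_of_le_of_ne haN1
          rw [haNd]
          exact fun e => hpk (Fin.last n) e.symm
        have hsN : Real.sign ((1:ℝ) - aN) = 1 :=
          Real.sign_of_pos (by linarith only [haNlt])
        rw [hsN]
        by_cases hIN : I + 1 = n
        · have hka0 : ka = 0 := by
            rw [hka, if_neg]
            rw [hPk]
            rintro ⟨-, hI⟩
            exact hI hIN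
          have h1w : (0:ℝ) < 1 - w := by linarith only [hw1]
          have hmupos : 0 < mu := by rw [hmu_eq]; positivity
          have e1' : n - I ≠ 0 := by omega
          have e2' : n - (I+1) = 0 := by omega
          have hCS1 : CS = 1 := by rw [hCS, hIN, Nat.choose_self, Nat.cast_one]
          simp only [sub_self, e2', pow_zero, one_pow, zero_pow e1',
            zero_pow (by omega : n ≠ 0), hka0, hCS1]
          ring_nf
          linarith only [hmupos]
        · have hPk' : Pk := by rw [hPk]; exact ⟨hpM, hIN⟩
          have haNlt' := (hPkaN hPk').1
          have hkapos : 0 < ka := by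
            rw [hka, if_pos hPk']
            apply lt_min
            · rw [he1]
              have h1X : (0:ℝ) < 1 - X := by linarith only [hX1]
              positivity
            · rw [he4]
              have h1aN : (0:ℝ) < 1 - aN := by linarith only [haNlt']
              positivity
          have e1' : n - I ≠ 0 := by omega
          have e2' : n - (I+1) ≠ 0 := by omega
          simp only [sub_self, zero_pow e1', zero_pow e2',
            zero_pow (by omega : n ≠ 0), one_pow]
          ring_nf
          linarith only [hkapos]
      · have hp1s : p < 1 := lt_of_le_of_ne hp1 hpo
        have hBspos : 0 < CS * p^(I+1) * (1-p)^(n-(I+1)) := by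
          have h1ppos : (0:ℝ) < 1 - p := by linarith only [hp1s]
          have hppos : 0 < p := by linarith only [hgt, hXY, hX0]
          positivity
        have hA : cp * (CS * p^(I+1) * (1-p)^(n-(I+1))) ≤
            mu * (CS * p^(I+1) * (1-p)^(n-(I+1))) - lam * (CI * p^I * (1-p)^(n-I)) := by
          have hmh := main_high n I hIn X Y p hX0 hp1 hgt.le hXY
          rw [← hCI, ← hCS] at hmh
          by_cases hX0' : X = 0
          · rw [hlam, if_pos hX0', hmu_eq, hcp, hw, hX0']
            have hcoef : ((I:ℝ)+1)*((Y-0)/2) ≤ ((I:ℝ)+1)*(1-(0+Y)/2) := by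
              have h2 : (0:ℝ) ≤ ((I:ℝ)+1) * (1 - Y) :=
                mul_nonneg hI1.le (by linarith only [hY1])
              linarith only [h2]
            have h3 := mul_le_mul_of_nonneg_right hcoef hBspos.le
            linarith only [h3]
          · rw [hlam, if_neg hX0', hmu_eq, hcp, hw]
            exact hmh
        have hB' : nu * (1-p)^n ≤ (cp/2) * (CS * p^(I+1) * (1-p)^(n-(I+1))) := by
          by_cases hPn' : Pn
          · have hnu_le : nu ≤ e3 := by rw [hnu, if_pos hPn']; exact min_le_right _ _
            have he3nn : 0 ≤ e3 := by rw [he3]; positivity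
            have c1 : (1-p)^n = (1-p)^(I+1) * (1-p)^(n-(I+1)) := by
              rw [← pow_add]; congr 1; omega
            have c2 : (1-p)^(I+1) ≤ 1 := pow_le_one₀ h1p (by linarith only [hp0])
            have c3 : Y^(I+1) ≤ p^(I+1) := pow_le_pow_left₀ hY0.le hgt.le _
            have hpnn : 0 ≤ (1-p)^(n-(I+1)) := pow_nonneg h1p _
            calc nu * (1-p)^n = nu * ((1-p)^(I+1) * (1-p)^(n-(I+1))) := by rw [c1]
              _ ≤ e3 * ((1-p)^(I+1) * (1-p)^(n-(I+1))) :=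
                  mul_le_mul_of_nonneg_right hnu_le (by positivity)
              _ ≤ e3 * (1 * (1-p)^(n-(I+1))) := by
                  apply mul_le_mul_of_nonneg_left _ he3nn
                  exact mul_le_mul_of_nonneg_right c2 hpnn
              _ = (cp/2) * CS * (Y^(I+1) * (1-p)^(n-(I+1))) := by rw [he3]; ring
              _ ≤ (cp/2) * CS * (p^(I+1) * (1-p)^(n-(I+1))) := by
                  apply mul_le_mul_of_nonneg_left (mul_le_mul_of_nonneg_right c3 hpnn)
                  positivity
              _ = (cp/2) * (CS * p^(I+1) * (1-p)^(n-(I+1))) := by ring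
          · rw [hnu, if_neg hPn', zero_mul]
            positivity
        have hC : -((cp/4) * (CS * p^(I+1) * (1-p)^(n-(I+1)))) ≤
            Real.sign (p - aN) * (p^n) * ka := by
          rcases lt_or_gt_of_ne (hpk (Fin.last n)) with hpaN | hpaN
          · have hpaN' : p < aN := by rw [haNd]; exact hpaN
            have hsN : Real.sign (p - aN) = -1 :=
              Real.sign_of_neg (by linarith only [hpaN'])
            rw [hsN]
            have hgoal : ka * p^n ≤ (cp/4) * (CS * p^(I+1) * (1-p)^(n-(I+1))) := by
              by_cases hPk' : Pk
              · have haNlt := (hPkaN hPk').1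
                have hka_le : ka ≤ e4 := by rw [hka, if_pos hPk']; exact min_le_right _ _
                have h1aN : (0:ℝ) ≤ 1 - aN := by linarith only [haNlt]
                have he4nn : 0 ≤ e4 := by rw [he4]; positivity
                have c1 : p^n = p^(I+1) * p^(n-(I+1)) := by rw [← pow_add]; congr 1; omega
                have c5 : p^(n-(I+1)) ≤ 1 := pow_le_one₀ hp0 hp1
                have c4 : (1-aN)^(n-I-1) ≤ (1-p)^(n-(I+1)) := by
                  have hee : n - I - 1 = n - (I+1) := by omega
                  rw [hee]
                  exact pow_le_pow_left₀ h1aN (by linarith only [hpaN']) _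
                have cY : Y^(I+1) ≤ 1 := pow_le_one₀ hY0.le hY1
                have hppow : 0 ≤ p^(I+1) := pow_nonneg hp0 _
                have t1 : Y^(I+1) * (1-aN)^(n-I-1) ≤ 1 * (1-p)^(n-(I+1)) :=
                  mul_le_mul cY c4 (pow_nonneg h1aN _) zero_le_one
                calc ka * p^n = ka * (p^(I+1) * p^(n-(I+1))) := by rw [c1]
                  _ ≤ e4 * (p^(I+1) * p^(n-(I+1))) :=
                      mul_le_mul_of_nonneg_right hka_le (by positivity)
                  _ ≤ e4 * (p^(I+1) * 1) := by
                      apply mul_le_mul_of_nonneg_left _ he4nn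
                      exact mul_le_mul_of_nonneg_left c5 hppow
                  _ = ((cp/4) * CS * p^(I+1)) * (Y^(I+1) * (1-aN)^(n-I-1)) := by
                      rw [he4]; ring
                  _ ≤ ((cp/4) * CS * p^(I+1)) * (1 * (1-p)^(n-(I+1))) := by
                      apply mul_le_mul_of_nonneg_left t1
                      positivity
                  _ = (cp/4) * (CS * p^(I+1) * (1-p)^(n-(I+1))) := by ring
              · rw [hka, if_neg hPk', zero_mul]
                positivity
            linarith only [hgoal]
          · have hpaN' : aN < p := by rw [haNd]; exact hpaN
            have hsN : Real.sign (p - aN) = 1 :=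
              Real.sign_of_pos (by linarith only [hpaN'])
            rw [hsN]
            have h2 : (0:ℝ) ≤ p^n * ka := mul_nonneg (pow_nonneg hp0 _) hka_nn
            have h3 : (0:ℝ) ≤ (cp/4) * (CS * p^(I+1) * (1-p)^(n-(I+1))) := by positivity
            linarith only [h2, h3]
        have hD : 0 < cp * (CS * p^(I+1) * (1-p)^(n-(I+1))) := mul_pos hcp0 hBspos
        linarith only [hA, hB', hC, hD]
  obtain ⟨b, hbIcc, hbsup⟩ := perturb n a d M hub hboxd hS
  have hopt := ha.2 b hbIcc
  rw [← hMdef] at hopt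
  exact absurd hbsup (not_lt.2 hopt)
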